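/- (Correctness of tridiagonal stationary qd with shift) Let L, U be as in the normalized bidiagonal setting with parameters l_k, u_k, and σ a scalar. Define û_1 = u_1 - σ and, for k ≥ 1, l̂_k = l_k u_k / û_k and û_{k+1} = l_k + u_{k+1} - σ - l̂_k, assuming all û_k ≠ 0. Then the unit lower bidiagonal matrix L̂ with subdiagonals l̂_k and the upper bidiagonal matrix Û with diagonal û_k and unit superdiagonal satisfy L̂ Û = L U - σ I. -/

import Mathlib

open Matrix

lemma qd_row_sum {F : Type*} [Field F] {n : ℕ} (a : ℕ → F) (i : Fin n) (f : Fin n → F) :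
    (∑ k : Fin n, (if (i : ℕ) = (k : ℕ) + 1 then a (k : ℕ) else if i = k then 1 else 0) * f k)
      = f i + if h : (i : ℕ) = 0 then 0
          else a ((i : ℕ) - 1) * f ⟨(i : ℕ) - 1, by omega⟩ := by
  rcases Nat.eq_zero_or_pos (i : ℕ) with h | h
  · rw [dif_pos h, add_zero, Fintype.sum_eq_single i]
    · simp [h]
    · intro b hb
      have h1 : ¬((i : ℕ) = (b : ℕ) + 1) := by omega
      have h2 : ¬ i = b := fun hc => hb hc.symm
      simp [h1, h2]
  · have hne : (⟨(i : ℕ) - 1, by omega⟩ : Fin n) ≠ i := by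
      intro hc
      have := congrArg Fin.val hc
      simp at this
      omega
    rw [dif_neg (by omega), Fintype.sum_eq_add (⟨(i : ℕ) - 1, by omega⟩ : Fin n) i hne]
    · have h1 : (i : ℕ) = ((⟨(i : ℕ) - 1, by omega⟩ : Fin n) : ℕ) + 1 := by simp; omega
      have h2 : ¬((i : ℕ) = (i : ℕ) + 1) := by omega
      rw [if_pos h1, if_neg h2, if_pos rfl, one_mul]
      ring
    · intro x ⟨hx1, hx2⟩
      have hx1' : ¬((i : ℕ) = (x : ℕ) + 1) := by
        intro hc
        apply hx1
        apply Fin.ext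
        simp
        omega
      simp [hx1', hx2.symm, fun hc : i = x => hx2 hc.symm]

/-- Correctness of the tridiagonal stationary qd step with shift: the recurrence
`û_1 = u_1 - σ`, `l̂_k = l_k u_k / û_k`, `û_{k+1} = l_k + u_{k+1} - σ - l̂_k`
(assuming all `û_k ≠ 0`) produces bidiagonal factors with `L̂ Û = L U - σ I`.
(0-based sequences.) -/
theorem tridiagonal_stationary_qd_correct {F : Type*} [Field F] {n : ℕ}
    (l u lhat uhat : ℕ → F) (σ : F)
    (huhat0 : uhat 0 = u 0 - σ)
    (huhat_ne : ∀ k, k < n → uhat k ≠ 0)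
    (hlhat : ∀ k, k < n - 1 → lhat k = l k * u k / uhat k)
    (huhat : ∀ k, k < n - 1 → uhat (k + 1) = l k + u (k + 1) - σ - lhat k) :
    let L : Matrix (Fin n) (Fin n) F :=
      Matrix.of fun i j => if i.1 = j.1 + 1 then l j.1 else if i = j then 1 else 0
    let U : Matrix (Fin n) (Fin n) F :=
      Matrix.of fun i j => if i = j then u i.1 else if j.1 = i.1 + 1 then 1 else 0
    let Lhat : Matrix (Fin n) (Fin n) F :=
      Matrix.of fun i j => if i.1 = j.1 + 1 then lhat j.1 else if i = j then 1 else 0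
    let Uhat : Matrix (Fin n) (Fin n) F :=
      Matrix.of fun i j => if i = j then uhat i.1 else if j.1 = i.1 + 1 then 1 else 0
    Lhat * Uhat = L * U - σ • (1 : Matrix (Fin n) (Fin n) F) := by
  intro L U Lhat Uhat
  ext i j
  have hLhs := qd_row_sum lhat i (fun k => Uhat k j)
  have hRhs := qd_row_sum l i (fun k => U k j)
  simp only [Matrix.mul_apply, Matrix.sub_apply, Matrix.smul_apply, Matrix.one_apply,
    smul_eq_mul, L, U, Lhat, Uhat, Matrix.of_apply] at hLhs hRhs ⊢
  rw [hLhs, hRhs]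
  clear hLhs hRhs
  rcases Nat.eq_zero_or_pos (i : ℕ) with h0 | h0
  · rw [dif_pos h0, dif_pos h0]
    by_cases hij : i = j
    · subst hij
      simp [Fin.ext_iff, h0, huhat0]
    · have hij' : ¬ (i : ℕ) = (j : ℕ) := fun hc => hij (Fin.ext hc)
      simp [hij, hij', mul_ite]
  · rw [dif_neg (by omega), dif_neg (by omega)]
    have him1 : (i : ℕ) - 1 < n - 1 := by omega
    have hlh := hlhat _ him1
    have huh := huhat _ him1
    have hune := huhat_ne ((i : ℕ) - 1) (by omega)
    have hi1 : (i : ℕ) - 1 + 1 = (i : ℕ) := by omega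
    rw [hi1] at huh
    by_cases hij : i = j
    · subst hij
      have hne2 : ¬ ((i : ℕ) = ((i : ℕ) - 1)) := by omega
      have hne3 : ¬ ((⟨(i : ℕ) - 1, by omega⟩ : Fin n) = i) := by
        intro hc; exact hne2 (congrArg Fin.val hc).symm
      simp only [if_pos rfl, hne3, if_neg hne3]
      have hc : (i : ℕ) = (i : ℕ) - 1 + 1 := by omega
      simp only [if_pos hc, if_true, if_false, mul_one]
      rw [huh]
      ring
    · have hij' : ¬ (i : ℕ) = (j : ℕ) := fun hc => hij (Fin.ext hc)
      by_cases hji : (j : ℕ) = (i : ℕ) - 1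
      · have hj : (⟨(i : ℕ) - 1, by omega⟩ : Fin n) = j := by
          apply Fin.ext; simp [hji]
        simp only [if_neg hij, hij', if_neg hij', hj, if_pos rfl]
        have h1 : ¬ ((j : ℕ) = (i : ℕ) + 1) := by omega
        rw [if_neg h1, hlh]
        simp only [if_true]
        field_simp
        ring
      · have hj : ¬ ((⟨(i : ℕ) - 1, by omega⟩ : Fin n) = j) := by
          intro hc; exact hji (congrArg Fin.val hc).symm
        have hj' : ¬ ((j : ℕ) = (i : ℕ) - 1 + 1) := by omega
        simp [hij, hij', hj, hj', mul_ite]
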